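/- If a matroid M has a double circuit D of degree j (i.e., whose circuit partition has j parts), then M has a minor isomorphic to the uniform matroid U_{j−2,j}. -/

import Mathlib

open Set

namespace Paper

/-! ### Multigraphs, walks, cycles -/

/-- A multigraph on vertex type `V` with edge type `E`: each edge has an
unordered pair of endpoints (possibly equal, giving a loop). -/
structure Multigraph (V : Type*) (E : Type*) where
  inc : E → Sym2 V

namespace Multigraph

variable {V E : Type*}

/-- `G.IsWalk I u es vs`: starting at vertex `u` and using only edges in `I`,
the edges `es` form a walk that successively visits the vertices `vs`. -/
inductive IsWalk (G : Multigraph V E) (I : Set E) : V → List E → List V → Prop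
  | nil (v : V) : IsWalk G I v [] []
  | cons {u v : V} {e : E} {es : List E} {vs : List V} :
      e ∈ I → G.inc e = s(u, v) → IsWalk G I v es vs → IsWalk G I u (e :: es) (v :: vs)

/-- A walk from `u` to `w` inside the edge set `I`. -/
def IsWalkFrom (G : Multigraph V E) (I : Set E) (u : V) (es : List E) (vs : List V)
    (w : V) : Prop :=
  G.IsWalk I u es vs ∧ (u :: vs).getLast (by simp) = w

/-- `u` and `w` are joined by a walk using edges of `I` (same component of `G[I]`). -/
def Reachable (G : Multigraph V E) (I : Set E) (u w : V) : Prop :=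
  ∃ es vs, G.IsWalkFrom I u es vs w

/-- A cycle based at `v` using edges of `I`: a nonempty closed walk with no repeated
edges and no repeated vertices (except for the base point).  A loop is a cycle of
length `1` and a pair of parallel edges forms a cycle of length `2`. -/
def IsCycle (G : Multigraph V E) (I : Set E) (v : V) (es : List E) (vs : List V) : Prop :=
  G.IsWalkFrom I v es vs v ∧ es ≠ [] ∧ es.Nodup ∧ vs.Nodup

/-- `C` is the edge set of a cycle of the subgraph `G[I]`. -/
def IsCycleIn (G : Multigraph V E) (I : Set E) (C : Set E) : Prop :=
  ∃ v es vs, G.IsCycle I v es vs ∧ C = {e | e ∈ es}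

/-- A path from `u` to `w`: a walk with pairwise distinct vertices. -/
def IsPath (G : Multigraph V E) (I : Set E) (u : V) (es : List E) (vs : List V)
    (w : V) : Prop :=
  G.IsWalkFrom I u es vs w ∧ (u :: vs).Nodup

/-- The vertices covered by an edge set `D`; the vertex set of `G[D]`. -/
def verts (G : Multigraph V E) (D : Set E) : Set V := {v | ∃ e ∈ D, v ∈ G.inc e}

/-- The degree of `v` in the subgraph `G[D]` (loops count twice). -/
noncomputable def degree (G : Multigraph V E) (D : Set E) (v : V) : ℕ :=
  {e ∈ D | v ∈ G.inc e}.ncard + {e ∈ D | G.inc e = s(v, v)}.ncard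

/-- Every connected component of `G[I]` contains at most one cycle:
any two cycles of `G[I]` lying in the same component coincide. -/
def BicircIndep (G : Multigraph V E) (I : Set E) : Prop :=
  ∀ C₁ C₂ : Set E, G.IsCycleIn I C₁ → G.IsCycleIn I C₂ →
    (∃ u w, u ∈ G.verts C₁ ∧ w ∈ G.verts C₂ ∧ G.Reachable I u w) → C₁ = C₂

/-- `M` is the bicircular matroid `B(G)` of the multigraph `G`. -/
def IsBicircularOf (G : Multigraph V E) (M : Matroid E) : Prop :=
  M.E = univ ∧ ∀ I : Set E, M.Indep I ↔ G.BicircIndep I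

end Multigraph

/-! ### Matroid notions -/

variable {α : Type*}

/-- The (extended) rank of a set in a matroid. -/
noncomputable def eRk (M : Matroid α) (X : Set α) : ℕ∞ :=
  ⨆ I ∈ {I | M.Indep I ∧ I ⊆ X}, I.encard

/-- A circuit: a minimal dependent set. -/
def Circuit (M : Matroid α) (C : Set α) : Prop :=
  M.Dep C ∧ ∀ D ⊂ C, ¬ M.Dep D

/-- A double circuit: a finite set `D` with `r(D) = |D| - 2` whose rank does not drop
when any single element is removed. -/
def DoubleCircuit (M : Matroid α) (D : Set α) : Prop :=
  D ⊆ M.E ∧ D.Finite ∧ eRk M D + 2 = D.encard ∧ ∀ d ∈ D, eRk M (D \ {d}) = eRk M D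

/-- `f` is a circuit partition of `D`: a partition of `D` into nonempty parts such that the
circuits of `M` contained in `D` are exactly the complements in `D` of the parts. -/
def CircuitPartition (M : Matroid α) (D : Set α) {k : ℕ} (f : Fin k → Set α) : Prop :=
  (∀ i, (f i).Nonempty) ∧ (∀ i j : Fin k, i ≠ j → Disjoint (f i) (f j)) ∧
    (⋃ i, f i) = D ∧ ∀ C : Set α, (Circuit M C ∧ C ⊆ D) ↔ ∃ i, C = D \ f i

/-- A part of a partition is singular if it has exactly one element. -/
def PositiveDoubleCircuit (M : Matroid α) (D : Set α) : Prop :=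
  DoubleCircuit M D ∧ ∃ (k : ℕ) (f : Fin k → Set α), CircuitPartition M D f ∧
    {i : Fin k | (f i).encard ≠ 1}.ncard < {i : Fin k | (f i).encard = 1}.ncard

/-- A hyperplane (copoint): a maximal proper flat. -/
def Hyperplane (M : Matroid α) (H : Set α) : Prop :=
  M.IsFlat H ∧ H ≠ M.E ∧ ∀ F, M.IsFlat F → H ⊂ F → F = M.E

/-- A coline: a flat of rank `r(M) - 2`. -/
def Coline (M : Matroid α) (L : Set α) : Prop :=
  M.IsFlat L ∧ eRk M L + 2 = eRk M M.E

/-- A positive coline: more simple copoints on `L` than multiple copoints on `L`. -/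
def PositiveColine (M : Matroid α) (L : Set α) : Prop :=
  Coline M L ∧
    {H | Hyperplane M H ∧ L ⊆ H ∧ (H \ L).encard ≠ 1}.ncard <
      {H | Hyperplane M H ∧ L ⊆ H ∧ (H \ L).encard = 1}.ncard

/-- Deletion of a set of elements. -/
def delete (M : Matroid α) (D : Set α) : Matroid α := M.restrict (M.E \ D)

/-- Contraction of a set of elements. -/
def contract (M : Matroid α) (C : Set α) : Matroid α := (delete M✶ C)✶

/-- `N` is a minor of `M`. -/
def IsMinorOf (N M : Matroid α) : Prop := ∃ C D : Set α, N = delete (contract M C) D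

/-- `M` is (isomorphic to) the uniform matroid `U_{r,n}`. -/
def IsUniform (r n : ℕ) {β : Type*} (M : Matroid β) : Prop :=
  M.E.encard = n ∧ ∀ I ⊆ M.E, (M.Indep I ↔ I.encard ≤ (r : ℕ∞))

/-- A simple matroid: every set of at most two elements of the ground set is independent. -/
def IsSimple (M : Matroid α) : Prop := ∀ X ⊆ M.E, X.encard ≤ 2 → M.Indep X


/-! ### Auxiliary lemmas -/

lemma encard_le_eRk {M : Matroid α} {I X : Set α} (hI : M.Indep I) (hIX : I ⊆ X) :
    I.encard ≤ eRk M X :=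
  le_biSup (fun I => I.encard) (show I ∈ {I | M.Indep I ∧ I ⊆ X} from ⟨hI, hIX⟩)

lemma exists_circuit_aux (M : Matroid α) :
    ∀ n (X : Set α), X.Finite → X.ncard = n → M.Dep X → ∃ C, Circuit M C ∧ C ⊆ X := by
  intro n
  induction n using Nat.strong_induction_on with
  | _ n ih =>
    intro X hfin hcard hdep
    by_cases h : ∀ Y ⊂ X, ¬ M.Dep Y
    · exact ⟨X, ⟨hdep, h⟩, subset_rfl⟩
    · push_neg at h
      obtain ⟨Y, hYX, hYdep⟩ := h
      obtain ⟨C, hC, hCY⟩ :=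
        ih Y.ncard (hcard ▸ Set.ncard_lt_ncard hYX hfin) Y (hfin.subset hYX.subset) rfl hYdep
      exact ⟨C, hC, hCY.trans hYX.subset⟩

lemma exists_circuit {M : Matroid α} {X : Set α} (hfin : X.Finite) (hdep : M.Dep X) :
    ∃ C, Circuit M C ∧ C ⊆ X :=
  exists_circuit_aux M X.ncard X hfin rfl hdep

lemma contract_indep_iff' {M : Matroid α} {C I : Set α} (hC : M.Indep C) :
    (contract M C).Indep I ↔ Disjoint I C ∧ M.Indep (I ∪ C) := by
  constructor
  · intro h
    simp only [contract, delete] at h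
    rw [Matroid.dual_indep_iff_exists'] at h
    obtain ⟨hIE, B, hB, hIB⟩ := h
    rw [Matroid.restrict_ground_eq] at hIE
    rw [Matroid.isBase_restrict_iff diff_subset] at hB
    obtain ⟨B₁, hB₁, hB₁C⟩ := hC.coindep.exists_isBase_subset_compl
    obtain ⟨B₂, hB₂, hBB₂, hB₂sub⟩ := hB.indep.exists_isBase_subset_union_isBase hB₁
    have hBeq : B = B₂ :=
      hB.eq_of_subset_indep hB₂.indep hBB₂ (hB₂sub.trans (union_subset hB.subset hB₁C))
    have hdualB : M✶.IsBase B := hBeq ▸ hB₂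
    have hMB : M.IsBase (M.E \ B) := hdualB.compl_isBase_of_dual
    have hBC : Disjoint C B := disjoint_sdiff_left.mono_left hB.subset |>.symm
    refine ⟨disjoint_sdiff_left.mono_left hIE |>.symm.symm, hMB.indep.subset ?_⟩
    · rw [subset_diff]
      exact ⟨union_subset (hIE.trans diff_subset) hC.subset_ground, disjoint_union_left.mpr ⟨hIB, hBC⟩⟩
  · rintro ⟨hIC, hU⟩
    obtain ⟨B₀, hB₀, hsub⟩ := hU.exists_isBase_superset
    have hB' : M✶.IsBase (M.E \ B₀) := hB₀.compl_isBase_dual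
    have hB'X : M.E \ B₀ ⊆ M.E \ C :=
      diff_subset_diff_right ((subset_union_right).trans hsub)
    have hbasis : M✶.IsBasis (M.E \ B₀) (M.E \ C) := by
      refine hB'.indep.isBasis_of_maximal_subset hB'X (fun J hJ hBJ _ => ?_) diff_subset
      exact (hB'.eq_of_subset_indep hJ hBJ).symm.subset
    simp only [contract, delete]
    rw [Matroid.dual_indep_iff_exists']
    refine ⟨?_, M.E \ B₀, hbasis.restrict_isBase, ?_⟩
    · rw [Matroid.restrict_ground_eq]
      rw [subset_diff]
      exact ⟨(subset_union_left).trans hU.subset_ground, hIC⟩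
    · exact disjoint_sdiff_right.mono_left ((subset_union_left).trans hsub)

/-- A double circuit of degree `j` (circuit partition with `j` parts)
yields a minor isomorphic to the uniform matroid `U_{j-2,j}`. -/
theorem doubleCircuit_uniform_minor {α : Type*} (M : Matroid α) (D : Set α) {j : ℕ}
    (f : Fin j → Set α) (hD : DoubleCircuit M D) (hf : CircuitPartition M D f) :
    ∃ N : Matroid α, IsMinorOf N M ∧ IsUniform (j - 2) j N := by
  obtain ⟨hDE, hDfin, hrk, hdrop⟩ := hD
  obtain ⟨hne, hdisj, hunion, hcirc⟩ := hf
  -- rule out j = 0 and j = 1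
  have hj2 : 2 ≤ j := by
    by_contra hj
    interval_cases j
    · have hDe : D = ∅ := by rw [← hunion]; exact iUnion_of_empty f
      rw [hDe, Set.encard_empty] at hrk
      have : (2 : ℕ∞) ≤ 0 := le_add_self.trans hrk.le
      norm_num at this
    · have hsub : D ⊆ f 0 := by
        rw [← hunion]
        exact iUnion_subset fun i => by rw [Subsingleton.elim i 0]
      have h0 := (hcirc ∅).mpr ⟨0, (diff_eq_empty.mpr hsub).symm⟩
      exact h0.1.1.not_indep M.empty_indep
  -- choose representatives
  choose d hd using hne
  have hdinj : Function.Injective d := by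
    intro i i' hii
    by_contra hne'
    exact (Set.disjoint_left.mp (hdisj i i' hne') (hd i)) (hii ▸ hd i')
  set T : Set α := Set.range d with hT
  have hTD : T ⊆ D := by
    rintro x ⟨i, rfl⟩
    rw [← hunion]; exact Set.mem_iUnion.mpr ⟨i, hd i⟩
  have hTE : T ⊆ M.E := hTD.trans hDE
  have hTfin : T.Finite := hDfin.subset hTD
  have hTcard : T.encard = (j : ℕ∞) := by
    rw [hT, ← Set.image_univ, hdinj.encard_image, Set.encard_univ]
    simp
  -- independence of subsets of D missing two representatives
  have hnoC : ∀ X, X ⊆ D → (∃ i i' : Fin j, i ≠ i' ∧ d i ∉ X ∧ d i' ∉ X) → M.Indep X := by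
    rintro X hXD ⟨i, i', hii, hiX, hi'X⟩
    by_contra hdep
    obtain ⟨c, hc, hcX⟩ := exists_circuit (hDfin.subset hXD) ⟨hdep, hXD.trans hDE⟩
    obtain ⟨m, rfl⟩ := (hcirc c).mp ⟨hc, hcX.trans hXD⟩
    have hpick : ∃ i₀ : Fin j, i₀ ≠ m ∧ d i₀ ∉ X := by
      rcases eq_or_ne i m with rfl | h
      · exact ⟨i', fun h' => hii h'.symm, hi'X⟩
      · exact ⟨i, h, hiX⟩
    obtain ⟨i₀, hi₀m, hi₀X⟩ := hpick
    have : d i₀ ∈ D \ f m :=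
      ⟨hTD ⟨i₀, rfl⟩, fun hmem => Set.disjoint_left.mp (hdisj i₀ m hi₀m) (hd i₀) hmem⟩
    exact hi₀X (hcX this)
  -- no D \ {d i} is independent
  have hdepdiff : ∀ i : Fin j, ¬ M.Indep (D \ {d i}) := by
    intro i hind
    have hmem : d i ∈ D := hTD ⟨i, rfl⟩
    have h1 : (D \ {d i}).encard ≤ eRk M D := by
      rw [← hdrop (d i) hmem]; exact encard_le_eRk hind subset_rfl
    have h2 : (D \ {d i}).encard + 1 = D.encard := Set.encard_diff_singleton_add_one hmem
    have h3 : (D \ {d i}).encard + 2 ≤ (D \ {d i}).encard + 1 := by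
      calc (D \ {d i}).encard + 2 ≤ eRk M D + 2 := add_le_add_left h1 2
        _ = D.encard := hrk
        _ = _ := h2.symm
    have hfin : (D \ {d i}).encard ≠ ⊤ := ((hDfin.subset diff_subset).encard_lt_top).ne
    have := (WithTop.add_le_add_iff_left hfin).mp h3
    have h' : (2:ℕ∞) ≤ 1 := this
    simp at h'
  set C₀ : Set α := D \ T with hC₀
  have hC₀D : C₀ ⊆ D := diff_subset
  have hC₀indep : M.Indep C₀ :=
    hnoC C₀ hC₀D ⟨⟨0, by omega⟩, ⟨1, by omega⟩, by simp [Fin.ext_iff],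
      fun h => h.2 ⟨_, rfl⟩, fun h => h.2 ⟨_, rfl⟩⟩
  have hNE' : ((contract M C₀).E \ (M.E \ T)) = T := by
    ext x
    simp only [contract, delete, Matroid.dual_ground, Matroid.restrict_ground_eq, mem_diff,
      hC₀, not_and, not_not]
    constructor
    · rintro ⟨⟨hxE, -⟩, h2⟩; exact h2 hxE
    · intro hxT
      exact ⟨⟨hTE hxT, fun _ => hxT⟩, fun _ => hxT⟩
  have hNE : (delete (contract M C₀) (M.E \ T)).E = T := hNE'
  refine ⟨delete (contract M C₀) (M.E \ T), ⟨C₀, M.E \ T, rfl⟩, ?_, ?_⟩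
  · rw [hNE, hTcard]
  · intro I hIE
    rw [hNE] at hIE
    have hIT : I ⊆ T := hIE
    have hIfin : I.Finite := hTfin.subset hIT
    have hIC₀ : Disjoint I C₀ := disjoint_sdiff_right.mono_left hIT
    have ha : (((T \ I).ncard : ℕ) : ℕ∞) = (T \ I).encard :=
      (hTfin.subset diff_subset).cast_ncard_eq
    have hb : ((I.ncard : ℕ) : ℕ∞) = I.encard := hIfin.cast_ncard_eq
    have hsplit : (T \ I).encard + I.encard = (j : ℕ∞) := by
      rw [Set.encard_diff_add_encard_of_subset hIT, hTcard]
    have hsplitN : (T \ I).ncard + I.ncard = j := by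
      rw [← ha, ← hb, ← Nat.cast_add, Nat.cast_inj] at hsplit
      exact hsplit
    have step1 : (delete (contract M C₀) (M.E \ T)).Indep I ↔ M.Indep (I ∪ C₀) := by
      rw [show (delete (contract M C₀) (M.E \ T)) =
        (contract M C₀).restrict ((contract M C₀).E \ (M.E \ T)) from rfl,
        Matroid.restrict_indep_iff, contract_indep_iff' hC₀indep, hNE']
      constructor
      · rintro ⟨⟨-, h⟩, -⟩; exact h
      · intro h
        exact ⟨⟨hIC₀, h⟩, hIT⟩
    rw [step1, ← hb, Nat.cast_le]
    constructor
    · -- independent → small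
      intro hind
      by_contra hbig
      have hle1 : (T \ I).ncard ≤ 1 := by omega
      have hle1' : (T \ I).encard ≤ 1 := by
        rw [← ha]; exact_mod_cast hle1
      have hkey : ∃ i : Fin j, D \ {d i} ⊆ I ∪ C₀ := by
        rcases Set.encard_le_one_iff_eq.mp hle1' with hemp | ⟨a, hsing⟩
        · refine ⟨⟨0, by omega⟩, fun x hx => ?_⟩
          by_cases hxT : x ∈ T
          · exact Or.inl (diff_eq_empty.mp hemp hxT)
          · exact Or.inr ⟨hx.1, hxT⟩
        · have haT : a ∈ T := (hsing ▸ (Set.mem_singleton a) : a ∈ T \ I).1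
          obtain ⟨i, rfl⟩ := haT
          refine ⟨i, fun x hx => ?_⟩
          by_cases hxT : x ∈ T
          · by_cases hxI : x ∈ I
            · exact Or.inl hxI
            · exact absurd (hsing ▸ (⟨hxT, hxI⟩ : x ∈ T \ I)) hx.2
          · exact Or.inr ⟨hx.1, hxT⟩
      obtain ⟨i, hi⟩ := hkey
      exact hdepdiff i (hind.subset hi)
    · -- small → independent
      intro hsmall
      have h2 : 1 < (T \ I).ncard := by omega
      obtain ⟨a, b, ha', hb', hab⟩ :=
        Set.one_lt_ncard_iff (hTfin.subset diff_subset) |>.mp h2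
      obtain ⟨i, rfl⟩ := ha'.1
      obtain ⟨i', rfl⟩ := hb'.1
      refine hnoC (I ∪ C₀) (union_subset (hIT.trans hTD) hC₀D)
        ⟨i, i', fun h => hab (by rw [h]), ?_, ?_⟩
      · rintro (h | h)
        · exact ha'.2 h
        · exact h.2 ⟨_, rfl⟩
      · rintro (h | h)
        · exact hb'.2 h
        · exact h.2 ⟨_, rfl⟩

end Paper
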